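/- For i = 1,2, let q_i(x,ξ) = (1/2) c_i(x) ξ² + 2 ∫_{(0,∞)} (1 − cos(ξ y)) ν_i(x,dy) be one-dimensional symmetric symbols (bounded c_i ≥ 0, Lévy kernels ν_i with sup_x ∫ min{1,y²} ν_i(x,dy) < ∞). Assume there exists m > 0 such that ν_1(x, B ∩ (m,∞)) ≥ ν_2(x, B ∩ (m,∞)) for all x ∈ ℝ and all Borel B ⊆ (0,∞). Then: (a) if ∫_{{|ξ|<r}} dξ / sup_{x∈ℝ} q_1(x,ξ) = ∞ for every r > 0, then ∫_{{|ξ|<r}} dξ / sup_{x∈ℝ} q_2(x,ξ) = ∞ for every r > 0; (b) if lim_{ξ→0} inf_{x∈ℝ} q_2(x,ξ)/ξ² = ∞ and ∫_{{|ξ|<r}} dξ / inf_{x∈ℝ} q_2(x,ξ) < ∞ for some r > 0, then lim_{ξ→0} inf_{x∈ℝ} q_1(x,ξ)/ξ² = ∞ and ∫_{{|ξ|<r}} dξ / inf_{x∈ℝ} q_1(x,ξ) < ∞ for some r > 0. -/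

import Mathlib

open MeasureTheory Filter Topology
open scoped ENNReal

noncomputable def oneDimSymbol (c : ℝ → ℝ) (ν : ℝ → MeasureTheory.Measure ℝ)
    (x ξ : ℝ) : ℝ≥0∞ :=
  ENNReal.ofReal ((1 / 2) * c x * ξ ^ 2) +
    2 * ∫⁻ y in Set.Ioi (0 : ℝ), ENNReal.ofReal (1 - Real.cos (ξ * y)) ∂(ν x)

namespace Stmt12Aux

lemma meas_integrand (η : ℝ) :
    Measurable fun y : ℝ => ENNReal.ofReal (1 - Real.cos (η * y)) := by
  fun_prop

lemma sym_even (c : ℝ → ℝ) (ν : ℝ → Measure ℝ) (x ξ : ℝ) :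
    oneDimSymbol c ν x (-ξ) = oneDimSymbol c ν x ξ := by
  unfold oneDimSymbol
  simp [neg_mul, Real.cos_neg]

lemma sym_double (c : ℝ → ℝ) (ν : ℝ → Measure ℝ) (x ξ : ℝ) :
    oneDimSymbol c ν x (2 * ξ) ≤ 4 * oneDimSymbol c ν x ξ := by
  unfold oneDimSymbol
  have h1 : ENNReal.ofReal ((1 / 2) * c x * (2 * ξ) ^ 2)
      = 4 * ENNReal.ofReal ((1 / 2) * c x * ξ ^ 2) := by
    rw [show (1 / 2) * c x * (2 * ξ) ^ 2 = 4 * ((1 / 2) * c x * ξ ^ 2) by ring,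
      ENNReal.ofReal_mul (by norm_num), ENNReal.ofReal_ofNat]
  have h2 : ∀ y : ℝ, ENNReal.ofReal (1 - Real.cos ((2 * ξ) * y))
      ≤ 4 * ENNReal.ofReal (1 - Real.cos (ξ * y)) := by
    intro y
    rw [show (4 : ℝ≥0∞) = ENNReal.ofReal 4 by rw [ENNReal.ofReal_ofNat],
      ← ENNReal.ofReal_mul (by norm_num)]
    apply ENNReal.ofReal_le_ofReal
    have hc := Real.cos_le_one (ξ * y)
    have hc' := Real.neg_one_le_cos (ξ * y)
    have : Real.cos ((2 * ξ) * y) = 2 * Real.cos (ξ * y) ^ 2 - 1 := by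
      rw [show (2 * ξ) * y = 2 * (ξ * y) by ring, Real.cos_two_mul]
    nlinarith
  calc ENNReal.ofReal ((1 / 2) * c x * (2 * ξ) ^ 2)
        + 2 * ∫⁻ y in Set.Ioi (0:ℝ), ENNReal.ofReal (1 - Real.cos ((2 * ξ) * y)) ∂(ν x)
      ≤ 4 * ENNReal.ofReal ((1 / 2) * c x * ξ ^ 2)
        + 2 * ∫⁻ y in Set.Ioi (0:ℝ), 4 * ENNReal.ofReal (1 - Real.cos (ξ * y)) ∂(ν x) := by
        rw [h1]
        exact add_le_add_right (mul_le_mul_right (lintegral_mono h2) 2) _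
    _ = 4 * (ENNReal.ofReal ((1 / 2) * c x * ξ ^ 2)
        + 2 * ∫⁻ y in Set.Ioi (0:ℝ), ENNReal.ofReal (1 - Real.cos (ξ * y)) ∂(ν x)) := by
        rw [lintegral_const_mul' 4 _ (by norm_num)]; ring

lemma sym_parts_zero {c : ℝ → ℝ} {ν : ℝ → Measure ℝ} {x η : ℝ}
    (h : oneDimSymbol c ν x η = 0) :
    ENNReal.ofReal ((1 / 2) * c x * η ^ 2) = 0 ∧
      (∀ᵐ y ∂((ν x).restrict (Set.Ioi (0:ℝ))), Real.cos (η * y) = 1) := by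
  unfold oneDimSymbol at h
  rcases add_eq_zero.mp h with ⟨hA, hB⟩
  have hB' : (∫⁻ y in Set.Ioi (0:ℝ), ENNReal.ofReal (1 - Real.cos (η * y)) ∂(ν x)) = 0 := by
    rcases mul_eq_zero.mp hB with h2 | h2
    · exact absurd h2 (by norm_num)
    · exact h2
  refine ⟨hA, ?_⟩
  have := (lintegral_eq_zero_iff (meas_integrand η)).mp hB'
  filter_upwards [this] with y hy
  simp only [Pi.zero_apply, ENNReal.ofReal_eq_zero] at hy
  have := Real.cos_le_one (η * y)
  linarith

lemma sym_c_zero {c : ℝ → ℝ} {ν : ℝ → Measure ℝ} {x η : ℝ} (hc : 0 ≤ c x) (hη : 0 < η)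
    (h : oneDimSymbol c ν x η = 0) : c x = 0 := by
  have hA := (sym_parts_zero h).1
  rw [ENNReal.ofReal_eq_zero] at hA
  nlinarith [sq_nonneg η, mul_pos hη hη]

lemma sym_sum_zero {c : ℝ → ℝ} {ν : ℝ → Measure ℝ} {x η ζ : ℝ} (hc : 0 ≤ c x) (hη : 0 < η)
    (h1 : oneDimSymbol c ν x η = 0) (h2 : oneDimSymbol c ν x ζ = 0) :
    oneDimSymbol c ν x (η + ζ) = 0 := by
  have hc0 := sym_c_zero hc hη h1
  unfold oneDimSymbol
  rw [hc0]
  have hint : (∫⁻ y in Set.Ioi (0:ℝ), ENNReal.ofReal (1 - Real.cos ((η + ζ) * y)) ∂(ν x)) = 0 := by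
    rw [lintegral_eq_zero_iff (meas_integrand (η + ζ))]
    filter_upwards [(sym_parts_zero h1).2, (sym_parts_zero h2).2] with y hy1 hy2
    have hs1 : Real.sin (η * y) = 0 := by
      have := Real.sin_sq_add_cos_sq (η * y)
      rw [hy1] at this
      nlinarith [sq_nonneg (Real.sin (η * y))]
    have hs2 : Real.sin (ζ * y) = 0 := by
      have := Real.sin_sq_add_cos_sq (ζ * y)
      rw [hy2] at this
      nlinarith [sq_nonneg (Real.sin (ζ * y))]
    have : Real.cos ((η + ζ) * y) = 1 := by
      rw [show (η + ζ) * y = η * y + ζ * y by ring, Real.cos_add, hy1, hy2, hs1, hs2]; ring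
    simp [this]
  rw [hint]
  simp

lemma sym_lim_zero {c : ℝ → ℝ} {ν : ℝ → Measure ℝ} {x ξ : ℝ} (ζ : ℕ → ℝ) (e : ℕ → ℝ≥0∞)
    (hζ : Tendsto ζ atTop (𝓝 ξ)) (he : Tendsto e atTop (𝓝 0))
    (hb : ∀ k, oneDimSymbol c ν x (ζ k) ≤ e k) :
    oneDimSymbol c ν x ξ = 0 := by
  have hApart : ∀ k, ENNReal.ofReal ((1 / 2) * c x * (ζ k) ^ 2) ≤ e k := fun k =>
    le_trans (self_le_add_right _ _) (hb k)
  have hBpart : ∀ k, (∫⁻ y in Set.Ioi (0:ℝ),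
      ENNReal.ofReal (1 - Real.cos (ζ k * y)) ∂(ν x)) ≤ e k := by
    intro k
    refine le_trans ?_ (hb k)
    refine le_trans ?_ (le_add_self)
    rw [two_mul]
    exact le_add_self
  -- A part
  have hAt : Tendsto (fun k => ENNReal.ofReal ((1 / 2) * c x * (ζ k) ^ 2)) atTop
      (𝓝 (ENNReal.ofReal ((1 / 2) * c x * ξ ^ 2))) := by
    apply (ENNReal.continuous_ofReal.tendsto _).comp
    exact ((hζ.pow 2).const_mul _)
  have hA0 : ENNReal.ofReal ((1 / 2) * c x * ξ ^ 2) = 0 :=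
    le_zero_iff.mp (le_of_tendsto_of_tendsto' hAt he hApart)
  -- B part
  have hB0 : (∫⁻ y in Set.Ioi (0:ℝ), ENNReal.ofReal (1 - Real.cos (ξ * y)) ∂(ν x)) = 0 := by
    refine le_zero_iff.mp ?_
    have hptw : ∀ y : ℝ, ENNReal.ofReal (1 - Real.cos (ξ * y))
        = liminf (fun k => ENNReal.ofReal (1 - Real.cos (ζ k * y))) atTop := by
      intro y
      refine (Tendsto.liminf_eq ?_).symm
      apply (ENNReal.continuous_ofReal.tendsto _).comp
      exact tendsto_const_nhds.sub ((Real.continuous_cos.tendsto _).comp (hζ.mul_const y))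
    calc (∫⁻ y in Set.Ioi (0:ℝ), ENNReal.ofReal (1 - Real.cos (ξ * y)) ∂(ν x))
        = ∫⁻ y in Set.Ioi (0:ℝ),
            liminf (fun k => ENNReal.ofReal (1 - Real.cos (ζ k * y))) atTop ∂(ν x) := by
          apply lintegral_congr; intro y; exact hptw y
      _ ≤ liminf (fun k => ∫⁻ y in Set.Ioi (0:ℝ),
            ENNReal.ofReal (1 - Real.cos (ζ k * y)) ∂(ν x)) atTop :=
          lintegral_liminf_le (fun k => meas_integrand (ζ k))
      _ ≤ liminf e atTop := liminf_le_liminf (Eventually.of_forall hBpart)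
      _ = 0 := he.liminf_eq
  unfold oneDimSymbol
  rw [hA0, hB0]
  simp

lemma lintegral_inv_quad (a : ℝ≥0∞) (ha : a ≠ ⊤) {r : ℝ} (hr : 0 < r) :
    ∫⁻ ξ in Metric.ball (0:ℝ) r, (a * ENNReal.ofReal (ξ ^ 2))⁻¹ = ⊤ := by
  rcases eq_or_ne a 0 with rfl | ha0
  · simp only [zero_mul, ENNReal.inv_zero]
    rw [setLIntegral_const, Real.volume_ball]
    rw [ENNReal.top_mul]
    simp [ENNReal.ofReal_eq_zero]
    linarith
  · by_contra hfin
    rw [← ne_eq, ← lt_top_iff_ne_top] at hfin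
    obtain ⟨n, hn⟩ := ENNReal.exists_nat_gt hfin.ne
    have hapos : 0 < a.toReal := ENNReal.toReal_pos ha0 ha
    set s : ℝ := min (r / 2) (2 / (a.toReal * (n + 1))) with hs
    have hspos : 0 < s := by
      apply lt_min (by linarith)
      positivity
    have hsr : s ≤ r := le_trans (min_le_left _ _) (by linarith)
    have key : (n : ℝ≥0∞) ≤ ∫⁻ ξ in Metric.ball (0:ℝ) r, (a * ENNReal.ofReal (ξ ^ 2))⁻¹ := by
      have h1 : ∫⁻ ξ in Metric.ball (0:ℝ) s, (a * ENNReal.ofReal (s ^ 2))⁻¹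
          ≤ ∫⁻ ξ in Metric.ball (0:ℝ) r, (a * ENNReal.ofReal (ξ ^ 2))⁻¹ := by
        refine le_trans ?_ (lintegral_mono_set (Metric.ball_subset_ball hsr))
        apply setLIntegral_mono (by fun_prop)
        intro ξ hξ
        apply ENNReal.inv_le_inv'
        apply mul_le_mul_right
        apply ENNReal.ofReal_le_ofReal
        rw [Metric.mem_ball, Real.dist_eq, sub_zero] at hξ
        nlinarith [abs_nonneg ξ, le_abs_self ξ, neg_abs_le ξ]
      rw [setLIntegral_const, Real.volume_ball] at h1
      refine le_trans ?_ h1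
      have hden0 : a * ENNReal.ofReal (s ^ 2) ≠ 0 := by
        apply mul_ne_zero ha0
        simp only [ne_eq, ENNReal.ofReal_eq_zero, not_le]
        positivity
      have hdent : a * ENNReal.ofReal (s ^ 2) ≠ ⊤ := ENNReal.mul_ne_top ha ENNReal.ofReal_ne_top
      rw [show (a * ENNReal.ofReal (s ^ 2))⁻¹ * ENNReal.ofReal (2 * s)
          = ENNReal.ofReal (2 * s) / (a * ENNReal.ofReal (s ^ 2)) by
          rw [div_eq_mul_inv, mul_comm]]
      rw [ENNReal.le_div_iff_mul_le (Or.inl hden0) (Or.inl hdent)]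
      have : (n : ℝ≥0∞) * (a * ENNReal.ofReal (s ^ 2))
          = ENNReal.ofReal (n * (a.toReal * s ^ 2)) := by
        rw [ENNReal.ofReal_mul (by positivity), ENNReal.ofReal_mul (by positivity),
          ENNReal.ofReal_natCast, ENNReal.ofReal_toReal ha]
      rw [this]
      apply ENNReal.ofReal_le_ofReal
      have hs2 : s ≤ 2 / (a.toReal * (n + 1)) := min_le_right _ _
      rw [div_eq_mul_inv] at hs2
      have h3 : a.toReal * s ≤ 2 / (n+1) := by
        rw [le_div_iff₀ (by positivity)]
        calc a.toReal * s * (n+1) = a.toReal * (n+1) * s := by ring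
          _ ≤ a.toReal * (n+1) * (2 * (a.toReal * (n + 1))⁻¹) := by
              apply mul_le_mul_of_nonneg_left hs2 (by positivity)
          _ = 2 := by field_simp
      calc (n : ℝ) * (a.toReal * s ^ 2) = (n : ℝ) * (a.toReal * s) * s := by ring
        _ ≤ (n : ℝ) * (2 / (n+1)) * s := by
            apply mul_le_mul_of_nonneg_right _ hspos.le
            exact mul_le_mul_of_nonneg_left h3 (Nat.cast_nonneg n)
        _ ≤ 2 * s := by
            apply mul_le_mul_of_nonneg_right _ hspos.le
            rw [mul_comm, div_mul_eq_mul_div, div_le_iff₀ (by positivity : (0:ℝ) < (n:ℝ)+1)]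
            nlinarith [Nat.cast_nonneg (α := ℝ) n]
    exact absurd (lt_of_le_of_lt key hn) (lt_irrefl _)

lemma sym_compare (c₁ c₂ : ℝ → ℝ) (ν₁ ν₂ : ℝ → Measure ℝ)
    (hc₂ : ∀ x, 0 ≤ c₂ x) (K : ℝ) (hK : ∀ x, c₂ x ≤ K)
    {m : ℝ} (hm : 0 < m)
    (hdom : ∀ x, ∀ B : Set ℝ, MeasurableSet B →
      ν₂ x (B ∩ Set.Ioi m) ≤ ν₁ x (B ∩ Set.Ioi m))
    (x ξ : ℝ) :
    oneDimSymbol c₂ ν₂ x ξ ≤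
      (ENNReal.ofReal (K / 2) + ENNReal.ofReal (max 1 (m ^ 2)) *
        (⨆ x', ∫⁻ y in Set.Ioi (0:ℝ), ENNReal.ofReal (min 1 (y ^ 2)) ∂(ν₂ x'))) *
        ENNReal.ofReal (ξ ^ 2) + oneDimSymbol c₁ ν₁ x ξ := by
  set T := ⨆ x', ∫⁻ y in Set.Ioi (0:ℝ), ENNReal.ofReal (min 1 (y ^ 2)) ∂(ν₂ x') with hT
  have hK0 : 0 ≤ K := le_trans (hc₂ x) (hK x)
  -- A part
  have hA : ENNReal.ofReal ((1 / 2) * c₂ x * ξ ^ 2)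
      ≤ ENNReal.ofReal (K / 2) * ENNReal.ofReal (ξ ^ 2) := by
    rw [← ENNReal.ofReal_mul (by positivity)]
    apply ENNReal.ofReal_le_ofReal
    nlinarith [sq_nonneg ξ, hc₂ x, hK x]
  -- split
  have hsplit : (∫⁻ y in Set.Ioi (0:ℝ), ENNReal.ofReal (1 - Real.cos (ξ * y)) ∂(ν₂ x))
      = (∫⁻ y in Set.Ioc (0:ℝ) m, ENNReal.ofReal (1 - Real.cos (ξ * y)) ∂(ν₂ x))
        + (∫⁻ y in Set.Ioi m, ENNReal.ofReal (1 - Real.cos (ξ * y)) ∂(ν₂ x)) := by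
    rw [← Set.Ioc_union_Ioi_eq_Ioi hm.le,
      lintegral_union measurableSet_Ioi (Set.Ioc_disjoint_Ioi le_rfl)]
  have hI1 : (∫⁻ y in Set.Ioc (0:ℝ) m, ENNReal.ofReal (1 - Real.cos (ξ * y)) ∂(ν₂ x))
      ≤ ENNReal.ofReal (max 1 (m ^ 2) * (ξ ^ 2 / 2)) * T := by
    calc (∫⁻ y in Set.Ioc (0:ℝ) m, ENNReal.ofReal (1 - Real.cos (ξ * y)) ∂(ν₂ x))
        ≤ ∫⁻ y in Set.Ioc (0:ℝ) m,
            ENNReal.ofReal (max 1 (m ^ 2) * (ξ ^ 2 / 2)) * ENNReal.ofReal (min 1 (y ^ 2))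
            ∂(ν₂ x) := by
          apply setLIntegral_mono (by fun_prop)
          intro y hy
          rw [← ENNReal.ofReal_mul (by positivity)]
          apply ENNReal.ofReal_le_ofReal
          have h1 : 1 - Real.cos (ξ * y) ≤ (ξ * y) ^ 2 / 2 := by
            have := Real.one_sub_sq_div_two_le_cos (x := ξ * y); linarith
          have hym : y ≤ m := hy.2
          have hy0 : 0 < y := hy.1
          rcases le_or_gt (y ^ 2) 1 with hc | hc
          · rw [min_eq_right hc]
            nlinarith [sq_nonneg ξ, le_max_left 1 (m ^ 2)]
          · rw [min_eq_left hc.le]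
            have hy2m : y ^ 2 ≤ m ^ 2 := by nlinarith
            have h2 : ξ ^ 2 * y ^ 2 ≤ ξ ^ 2 * m ^ 2 :=
              mul_le_mul_of_nonneg_left hy2m (sq_nonneg ξ)
            have h3 : ξ ^ 2 * m ^ 2 ≤ ξ ^ 2 * max 1 (m ^ 2) :=
              mul_le_mul_of_nonneg_left (le_max_right 1 (m ^ 2)) (sq_nonneg ξ)
            nlinarith
      _ = ENNReal.ofReal (max 1 (m ^ 2) * (ξ ^ 2 / 2)) *
            ∫⁻ y in Set.Ioc (0:ℝ) m, ENNReal.ofReal (min 1 (y ^ 2)) ∂(ν₂ x) :=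
          lintegral_const_mul' _ _ ENNReal.ofReal_ne_top
      _ ≤ ENNReal.ofReal (max 1 (m ^ 2) * (ξ ^ 2 / 2)) * T := by
          apply mul_le_mul_right
          refine le_trans (lintegral_mono_set Set.Ioc_subset_Ioi_self) ?_
          exact le_iSup (fun x' => ∫⁻ y in Set.Ioi (0:ℝ),
            ENNReal.ofReal (min 1 (y ^ 2)) ∂(ν₂ x')) x
  have hI2 : (∫⁻ y in Set.Ioi m, ENNReal.ofReal (1 - Real.cos (ξ * y)) ∂(ν₂ x))
      ≤ (∫⁻ y in Set.Ioi (0:ℝ), ENNReal.ofReal (1 - Real.cos (ξ * y)) ∂(ν₁ x)) := by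
    have hle : (ν₂ x).restrict (Set.Ioi m) ≤ (ν₁ x).restrict (Set.Ioi m) := by
      refine Measure.le_iff.mpr fun s hs => ?_
      rw [Measure.restrict_apply hs, Measure.restrict_apply hs]
      exact hdom x s hs
    calc (∫⁻ y in Set.Ioi m, ENNReal.ofReal (1 - Real.cos (ξ * y)) ∂(ν₂ x))
        ≤ ∫⁻ y in Set.Ioi m, ENNReal.ofReal (1 - Real.cos (ξ * y)) ∂(ν₁ x) :=
          lintegral_mono' hle le_rfl
      _ ≤ ∫⁻ y in Set.Ioi (0:ℝ), ENNReal.ofReal (1 - Real.cos (ξ * y)) ∂(ν₁ x) :=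
          lintegral_mono_set (Set.Ioi_subset_Ioi hm.le)
  have h2I1 : 2 * ENNReal.ofReal (max 1 (m ^ 2) * (ξ ^ 2 / 2)) * T
      = ENNReal.ofReal (max 1 (m ^ 2)) * T * ENNReal.ofReal (ξ ^ 2) := by
    rw [show (2:ℝ≥0∞) = ENNReal.ofReal 2 by rw [ENNReal.ofReal_ofNat],
      ← ENNReal.ofReal_mul (by norm_num),
      show (2:ℝ) * (max 1 (m ^ 2) * (ξ ^ 2 / 2)) = max 1 (m ^ 2) * ξ ^ 2 by ring,
      ENNReal.ofReal_mul (by positivity)]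
    ring
  calc oneDimSymbol c₂ ν₂ x ξ
      = ENNReal.ofReal ((1 / 2) * c₂ x * ξ ^ 2)
        + (2 * (∫⁻ y in Set.Ioc (0:ℝ) m, ENNReal.ofReal (1 - Real.cos (ξ * y)) ∂(ν₂ x))
          + 2 * (∫⁻ y in Set.Ioi m, ENNReal.ofReal (1 - Real.cos (ξ * y)) ∂(ν₂ x))) := by
        unfold oneDimSymbol
        rw [hsplit]; ring
    _ ≤ ENNReal.ofReal (K / 2) * ENNReal.ofReal (ξ ^ 2)
        + (2 * (ENNReal.ofReal (max 1 (m ^ 2) * (ξ ^ 2 / 2)) * T)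
          + 2 * (∫⁻ y in Set.Ioi (0:ℝ), ENNReal.ofReal (1 - Real.cos (ξ * y)) ∂(ν₁ x))) := by
        exact add_le_add hA (add_le_add (mul_le_mul_right hI1 2) (mul_le_mul_right hI2 2))
    _ ≤ (ENNReal.ofReal (K / 2) + ENNReal.ofReal (max 1 (m ^ 2)) * T) * ENNReal.ofReal (ξ ^ 2)
        + oneDimSymbol c₁ ν₁ x ξ := by
        rw [← mul_assoc, h2I1, add_mul]
        unfold oneDimSymbol
        calc ENNReal.ofReal (K / 2) * ENNReal.ofReal (ξ ^ 2)
            + (ENNReal.ofReal (max 1 (m ^ 2)) * T * ENNReal.ofReal (ξ ^ 2)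
              + 2 * ∫⁻ y in Set.Ioi (0:ℝ), ENNReal.ofReal (1 - Real.cos (ξ * y)) ∂(ν₁ x))
            ≤ ENNReal.ofReal (K / 2) * ENNReal.ofReal (ξ ^ 2)
              + (ENNReal.ofReal (max 1 (m ^ 2)) * T * ENNReal.ofReal (ξ ^ 2)
                + (ENNReal.ofReal ((1 / 2) * c₁ x * ξ ^ 2)
                  + 2 * ∫⁻ y in Set.Ioi (0:ℝ), ENNReal.ofReal (1 - Real.cos (ξ * y)) ∂(ν₁ x))) := by
              gcongr
              exact le_add_self
          _ = ENNReal.ofReal (K / 2) * ENNReal.ofReal (ξ ^ 2)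
              + ENNReal.ofReal (max 1 (m ^ 2)) * T * ENNReal.ofReal (ξ ^ 2)
              + (ENNReal.ofReal ((1 / 2) * c₁ x * ξ ^ 2)
                + 2 * ∫⁻ y in Set.Ioi (0:ℝ), ENNReal.ofReal (1 - Real.cos (ξ * y)) ∂(ν₁ x)) := by
              ring

end Stmt12Aux



/-- comparison of the Chung–Fuchs conditions when `ν₁` dominates `ν₂`
outside a compact set (here outside `(m,∞)`'s complement). -/
theorem stmt12 (c₁ c₂ : ℝ → ℝ) (ν₁ ν₂ : ℝ → MeasureTheory.Measure ℝ)
    (hc₁ : ∀ x, 0 ≤ c₁ x) (hc₂ : ∀ x, 0 ≤ c₂ x)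
    (hc₁b : ∃ K : ℝ, ∀ x, c₁ x ≤ K) (hc₂b : ∃ K : ℝ, ∀ x, c₂ x ≤ K)
    (hν₁ : (⨆ x, ∫⁻ y in Set.Ioi (0 : ℝ), ENNReal.ofReal (min 1 (y ^ 2)) ∂(ν₁ x)) < ∞)
    (hν₂ : (⨆ x, ∫⁻ y in Set.Ioi (0 : ℝ), ENNReal.ofReal (min 1 (y ^ 2)) ∂(ν₂ x)) < ∞)
    (m : ℝ) (hm : 0 < m)
    (hdom : ∀ x, ∀ B : Set ℝ, MeasurableSet B →
      ν₂ x (B ∩ Set.Ioi m) ≤ ν₁ x (B ∩ Set.Ioi m))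
    (hms₁ : Measurable fun ξ : ℝ => ⨆ x, oneDimSymbol c₁ ν₁ x ξ)
    (hms₂ : Measurable fun ξ : ℝ => ⨆ x, oneDimSymbol c₂ ν₂ x ξ)
    (hmi₁ : Measurable fun ξ : ℝ => ⨅ x, oneDimSymbol c₁ ν₁ x ξ)
    (hmi₂ : Measurable fun ξ : ℝ => ⨅ x, oneDimSymbol c₂ ν₂ x ξ) :
    -- (a)
    ((∀ r > (0 : ℝ), ∫⁻ ξ in Metric.ball (0 : ℝ) r,
        (⨆ x, oneDimSymbol c₁ ν₁ x ξ)⁻¹ = ∞) →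
      ∀ r > (0 : ℝ), ∫⁻ ξ in Metric.ball (0 : ℝ) r,
        (⨆ x, oneDimSymbol c₂ ν₂ x ξ)⁻¹ = ∞) ∧
    -- (b)
    ((Tendsto (fun ξ : ℝ => (⨅ x, oneDimSymbol c₂ ν₂ x ξ) / ENNReal.ofReal (ξ ^ 2))
        (𝓝[≠] (0 : ℝ)) (𝓝 ∞)) →
      (∃ r > (0 : ℝ), ∫⁻ ξ in Metric.ball (0 : ℝ) r,
        (⨅ x, oneDimSymbol c₂ ν₂ x ξ)⁻¹ < ∞) →
      (Tendsto (fun ξ : ℝ => (⨅ x, oneDimSymbol c₁ ν₁ x ξ) / ENNReal.ofReal (ξ ^ 2))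
        (𝓝[≠] (0 : ℝ)) (𝓝 ∞)) ∧
      ∃ r > (0 : ℝ), ∫⁻ ξ in Metric.ball (0 : ℝ) r,
        (⨅ x, oneDimSymbol c₁ ν₁ x ξ)⁻¹ < ∞) := by
  obtain ⟨K, hK⟩ := hc₂b
  set T := ⨆ x, ∫⁻ y in Set.Ioi (0 : ℝ), ENNReal.ofReal (min 1 (y ^ 2)) ∂(ν₂ x) with hTdef
  set a : ℝ≥0∞ := ENNReal.ofReal (K / 2) + ENNReal.ofReal (max 1 (m ^ 2)) * T with hadef
  have haT : a ≠ ⊤ := by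
    rw [hadef]
    exact ENNReal.add_ne_top.mpr
      ⟨ENNReal.ofReal_ne_top, ENNReal.mul_ne_top ENNReal.ofReal_ne_top hν₂.ne⟩
  have hcomp : ∀ x ξ, oneDimSymbol c₂ ν₂ x ξ
      ≤ a * ENNReal.ofReal (ξ ^ 2) + oneDimSymbol c₁ ν₁ x ξ :=
    fun x ξ => Stmt12Aux.sym_compare c₁ c₂ ν₁ ν₂ hc₂ K hK hm hdom x ξ
  have hne0 : ∀ᵐ ξ : ℝ, ξ ≠ (0:ℝ) := by
    refine ae_iff.mpr ?_
    convert Real.volume_singleton (a := (0:ℝ)) using 2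
    ext z; simp
  constructor
  · -- part (a)
    intro hR r hr
    set G : ℝ → ℝ≥0∞ := fun ξ => ⨆ x, oneDimSymbol c₁ ν₁ x ξ with hGdef
    set S : ℝ → ℝ≥0∞ := fun ξ => ⨆ x, oneDimSymbol c₂ ν₂ x ξ with hSdef
    have hSle : ∀ ξ, S ξ ≤ a * ENNReal.ofReal (ξ ^ 2) + G ξ := by
      intro ξ
      exact iSup_le fun x => (hcomp x ξ).trans
        (add_le_add_right (le_iSup (fun x' => oneDimSymbol c₁ ν₁ x' ξ) x) _)
    have hGeven : ∀ ξ, G (-ξ) = G ξ :=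
      fun ξ => iSup_congr fun x => Stmt12Aux.sym_even c₁ ν₁ x ξ
    have hGdouble : ∀ ξ, G (2 * ξ) ≤ 4 * G ξ := fun ξ =>
      iSup_le fun x => (Stmt12Aux.sym_double c₁ ν₁ x ξ).trans
        (mul_le_mul_right (le_iSup (fun x' => oneDimSymbol c₁ ν₁ x' ξ) x) 4)
    by_cases hA : ∃ δ, (0 < δ ∧ δ < r) ∧ ∃ ε : ℝ≥0∞, (0 < ε ∧ ε ≠ ⊤) ∧
        ∀ η, δ / 2 ≤ η → η ≤ δ → ε ≤ G η
    · -- Case A : G bounded below by quadratic near 0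
      obtain ⟨δ, ⟨hδ0, hδr⟩, ε, ⟨hε0, hεT⟩, hεG⟩ := hA
      have hbase : ∀ ξ : ℝ, 0 < ξ → ξ ≤ δ → δ / 2 ≤ ξ →
          ε * ENNReal.ofReal (ξ ^ 2 / δ ^ 2) ≤ G ξ := by
        intro ξ hξ0 hξδ hhalf
        have h1 : ε * ENNReal.ofReal (ξ ^ 2 / δ ^ 2) ≤ ε * 1 := by
          apply mul_le_mul_right
          rw [ENNReal.ofReal_le_one, div_le_one (by positivity)]
          nlinarith
        rw [mul_one] at h1
        exact h1.trans (hεG ξ hhalf hξδ)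
      have hquad : ∀ n : ℕ, ∀ ξ : ℝ, 0 < ξ → ξ ≤ δ → δ < 2 ^ (n + 1) * ξ →
          ε * ENNReal.ofReal (ξ ^ 2 / δ ^ 2) ≤ G ξ := by
        intro n
        induction n with
        | zero =>
          intro ξ hξ0 hξδ hlt
          norm_num at hlt
          exact hbase ξ hξ0 hξδ (by linarith)
        | succ n ih =>
          intro ξ hξ0 hξδ hlt
          by_cases hhalf : δ / 2 ≤ ξ
          · exact hbase ξ hξ0 hξδ hhalf
          · push_neg at hhalf
            have h2ξ : 2 * ξ ≤ δ := by linarith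
            have hih := ih (2 * ξ) (by linarith) h2ξ
              (by rw [pow_succ] at hlt; linarith [hlt])
            have hih' : ε * ENNReal.ofReal ((2 * ξ) ^ 2 / δ ^ 2) ≤ 4 * G ξ :=
              hih.trans (hGdouble ξ)
            have heq : ENNReal.ofReal ((2 * ξ) ^ 2 / δ ^ 2)
                = 4 * ENNReal.ofReal (ξ ^ 2 / δ ^ 2) := by
              rw [show (2 * ξ) ^ 2 / δ ^ 2 = 4 * (ξ ^ 2 / δ ^ 2) by ring,
                ENNReal.ofReal_mul (by norm_num), ENNReal.ofReal_ofNat]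
            rw [heq, show ε * (4 * ENNReal.ofReal (ξ ^ 2 / δ ^ 2))
              = 4 * (ε * ENNReal.ofReal (ξ ^ 2 / δ ^ 2)) by ring] at hih'
            exact (ENNReal.mul_le_mul_iff_right (by norm_num) (by norm_num)).mp hih'
      have hlow : ∀ ξ : ℝ, 0 < ξ → ξ ≤ δ →
          ε * ENNReal.ofReal (ξ ^ 2 / δ ^ 2) ≤ G ξ := by
        intro ξ hξ0 hξδ
        obtain ⟨n, hn⟩ := pow_unbounded_of_one_lt (δ / ξ) (one_lt_two : (1:ℝ) < 2)
        rw [div_lt_iff₀ hξ0] at hn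
        refine hquad n ξ hξ0 hξδ ?_
        have h2 : (2:ℝ) ^ n ≤ 2 ^ (n + 1) := by
          apply pow_le_pow_right₀ (by norm_num) (by omega)
        nlinarith [h2, hξ0]
      set b : ℝ≥0∞ := a * ENNReal.ofReal (δ ^ 2) * ε⁻¹ with hbdef
      have hbT : b ≠ ⊤ := ENNReal.mul_ne_top (ENNReal.mul_ne_top haT ENNReal.ofReal_ne_top)
        (ENNReal.inv_ne_top.mpr hε0.ne')
      have hb1T : b + 1 ≠ ⊤ := ENNReal.add_ne_top.mpr ⟨hbT, ENNReal.one_ne_top⟩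
      have key : ∀ ξ : ℝ, ξ ∈ Metric.ball (0:ℝ) δ → ξ ≠ 0 → S ξ ≤ (b + 1) * G ξ := by
        intro ξ hmem hne
        rw [Metric.mem_ball, Real.dist_eq, sub_zero] at hmem
        have habs0 : 0 < |ξ| := abs_pos.mpr hne
        have hGabs : G |ξ| = G ξ := by
          rcases abs_cases ξ with ⟨h, _⟩ | ⟨h, _⟩
          · rw [h]
          · rw [h, hGeven]
        have h1 : ε * ENNReal.ofReal (ξ ^ 2 / δ ^ 2) ≤ G ξ := by
          have := hlow |ξ| habs0 hmem.le
          rwa [sq_abs, hGabs] at this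
        have hX : ENNReal.ofReal (ξ ^ 2 / δ ^ 2) ≤ ε⁻¹ * G ξ := by
          calc ENNReal.ofReal (ξ ^ 2 / δ ^ 2)
              = (ε⁻¹ * ε) * ENNReal.ofReal (ξ ^ 2 / δ ^ 2) := by
                rw [ENNReal.inv_mul_cancel hε0.ne' hεT, one_mul]
            _ = ε⁻¹ * (ε * ENNReal.ofReal (ξ ^ 2 / δ ^ 2)) := mul_assoc _ _ _
            _ ≤ ε⁻¹ * G ξ := mul_le_mul_right h1 _
        have h2 : a * ENNReal.ofReal (ξ ^ 2) ≤ b * G ξ := by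
          calc a * ENNReal.ofReal (ξ ^ 2)
              = a * (ENNReal.ofReal (δ ^ 2) * ENNReal.ofReal (ξ ^ 2 / δ ^ 2)) := by
                rw [← ENNReal.ofReal_mul (by positivity)]
                congr 2
                field_simp
            _ ≤ a * (ENNReal.ofReal (δ ^ 2) * (ε⁻¹ * G ξ)) := by
                exact mul_le_mul_right (mul_le_mul_right hX _) _
            _ = b * G ξ := by rw [hbdef]; ring
        calc S ξ ≤ a * ENNReal.ofReal (ξ ^ 2) + G ξ := hSle ξ
          _ ≤ b * G ξ + G ξ := add_le_add_left h2 _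
          _ = (b + 1) * G ξ := by ring
      have hineq : (b + 1)⁻¹ * ∫⁻ ξ in Metric.ball (0:ℝ) δ, (G ξ)⁻¹
          ≤ ∫⁻ ξ in Metric.ball (0:ℝ) δ, (S ξ)⁻¹ := by
        rw [← lintegral_const_mul' _ _ (ENNReal.inv_ne_top.mpr (by simp))]
        apply lintegral_mono_ae
        filter_upwards [ae_restrict_mem Metric.isOpen_ball.measurableSet,
          ae_restrict_of_ae hne0] with ξ hmem hne
        calc (b + 1)⁻¹ * (G ξ)⁻¹ = ((b + 1) * G ξ)⁻¹ :=
            (ENNReal.mul_inv (Or.inl (by simp)) (Or.inl hb1T)).symm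
          _ ≤ (S ξ)⁻¹ := ENNReal.inv_le_inv' (key ξ hmem hne)
      rw [hR δ hδ0] at hineq
      rw [ENNReal.mul_top (ENNReal.inv_ne_zero.mpr hb1T)] at hineq
      refine top_le_iff.mp (le_trans hineq ?_)
      exact lintegral_mono_set (Metric.ball_subset_ball hδr.le)
    · -- Case B : G vanishes identically away from 0
      push_neg at hA
      have hzero : ∀ δ : ℝ, 0 < δ → δ < r → ∃ η, δ / 2 ≤ η ∧ η ≤ δ ∧ G η = 0 := by
        intro δ h0 hr'
        have hsel : ∀ j : ℕ, ∃ η, δ / 2 ≤ η ∧ η ≤ δ ∧ G η < (((j + 1 : ℕ)) : ℝ≥0∞)⁻¹ := by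
          intro j
          refine hA δ ⟨h0, hr'⟩ (((j + 1 : ℕ) : ℝ≥0∞))⁻¹ ⟨?_, ?_⟩
          · exact ENNReal.inv_pos.mpr (ENNReal.natCast_ne_top _)
          · refine ENNReal.inv_ne_top.mpr ?_
            exact_mod_cast Nat.succ_ne_zero j
        choose u hu1 hu2 hu3 using hsel
        have hucc : ∀ j, u j ∈ Set.Icc (δ / 2) δ := fun j => ⟨hu1 j, hu2 j⟩
        obtain ⟨η, hηIcc, φ, hφmono, hφtend⟩ := (isCompact_Icc).tendsto_subseq hucc
        refine ⟨η, hηIcc.1, hηIcc.2, ?_⟩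
        apply ENNReal.iSup_eq_zero.mpr
        intro x
        apply Stmt12Aux.sym_lim_zero (fun j => u (φ j))
          (fun j => (((φ j + 1 : ℕ)) : ℝ≥0∞)⁻¹) hφtend
        · exact ENNReal.tendsto_inv_nat_nhds_zero.comp
            ((tendsto_add_atTop_nat 1).comp hφmono.tendsto_atTop)
        · intro k
          exact le_trans (le_iSup (fun x' => oneDimSymbol c₁ ν₁ x' (u (φ k))) x) (hu3 (φ k)).le
      have hscale : ∀ k : ℕ, ∃ η, 0 < η ∧ η ≤ r / (k + 2) ∧ G η = 0 := by
        intro k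
        have hd0 : 0 < r / ((k:ℝ) + 2) := by positivity
        have hdr : r / ((k:ℝ) + 2) < r := by
          apply div_lt_self hr
          have : (0:ℝ) ≤ (k:ℝ) := Nat.cast_nonneg k
          linarith
        obtain ⟨η, h1, h2, h3⟩ := hzero _ hd0 hdr
        exact ⟨η, lt_of_lt_of_le (half_pos hd0) h1, h2, h3⟩
      choose η hη1 hη2 hη3 using hscale
      have hGsum : ∀ s t : ℝ, 0 < s → G s = 0 → G t = 0 → G (s + t) = 0 := by
        intro s t hs h1 h2
        apply ENNReal.iSup_eq_zero.mpr
        intro x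
        exact Stmt12Aux.sym_sum_zero (hc₁ x) hs
          (ENNReal.iSup_eq_zero.mp h1 x) (ENNReal.iSup_eq_zero.mp h2 x)
      have hmul : ∀ k n : ℕ, G (((n : ℝ) + 1) * η k) = 0 := by
        intro k n
        induction n with
        | zero => simpa using hη3 k
        | succ n ih =>
          have hsum := hGsum (η k) (((n : ℝ) + 1) * η k) (hη1 k) (hη3 k) ih
          rw [show (((n + 1 : ℕ) : ℝ) + 1) * η k = η k + ((n : ℝ) + 1) * η k by
            push_cast; ring]
          exact hsum
      have hGpos0 : ∀ ξ : ℝ, 0 < ξ → G ξ = 0 := by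
        intro ξ hξ
        set ζ : ℕ → ℝ := fun k => ((⌊ξ / η k⌋₊ : ℝ) + 1) * η k with hζdef
        have hζ0 : ∀ k, G (ζ k) = 0 := fun k => hmul k _
        have hζlb : ∀ k, ξ ≤ ζ k := by
          intro k
          have h := Nat.lt_floor_add_one (ξ / η k)
          rw [div_lt_iff₀ (hη1 k)] at h
          exact h.le
        have hζub : ∀ k, ζ k ≤ ξ + r / (k + 2) := by
          intro k
          have h1 : (⌊ξ / η k⌋₊ : ℝ) ≤ ξ / η k := Nat.floor_le (div_nonneg hξ.le (hη1 k).le)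
          calc ζ k = (⌊ξ / η k⌋₊ : ℝ) * η k + η k := by rw [hζdef]; ring
            _ ≤ (ξ / η k) * η k + η k := by
                exact add_le_add_left (mul_le_mul_of_nonneg_right h1 (hη1 k).le) _
            _ = ξ + η k := by rw [div_mul_cancel₀ _ (hη1 k).ne']
            _ ≤ ξ + r / (k + 2) := by linarith [hη2 k]
        have hub_t : Tendsto (fun k : ℕ => ξ + r / (k + 2)) atTop (𝓝 ξ) := by
          have h0 : Tendsto (fun k : ℕ => r / ((k : ℝ) + 2)) atTop (𝓝 0) := by
            have h1 := (tendsto_const_div_atTop_nhds_zero_nat r).comp (tendsto_add_atTop_nat 2)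
            refine h1.congr fun k => ?_
            simp only [Function.comp]
            push_cast
            ring_nf
          have h1 : Tendsto (fun k : ℕ => ξ + r / ((k:ℝ) + 2)) atTop (𝓝 (ξ + 0)) :=
            Tendsto.const_add ξ h0
          simpa using h1
        have hζt : Tendsto ζ atTop (𝓝 ξ) :=
          tendsto_of_tendsto_of_tendsto_of_le_of_le tendsto_const_nhds hub_t hζlb hζub
        apply ENNReal.iSup_eq_zero.mpr
        intro x
        apply Stmt12Aux.sym_lim_zero ζ (fun _ => 0) hζt tendsto_const_nhds
        intro k
        exact (ENNReal.iSup_eq_zero.mp (hζ0 k) x).le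
      have hpt : ∀ ξ : ℝ, ξ ≠ 0 → S ξ ≤ a * ENNReal.ofReal (ξ ^ 2) := by
        intro ξ hne
        have hG0 : G ξ = 0 := by
          rcases lt_or_gt_of_ne hne with h | h
          · have h2 := hGeven (-ξ)
            rw [neg_neg] at h2
            rw [h2]
            exact hGpos0 (-ξ) (by linarith)
          · exact hGpos0 ξ h
        have := hSle ξ
        rwa [hG0, add_zero] at this
      have hq := Stmt12Aux.lintegral_inv_quad a haT hr
      refine top_le_iff.mp ?_
      rw [← hq]
      apply lintegral_mono_ae
      filter_upwards [ae_restrict_of_ae hne0] with ξ hne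
      exact ENNReal.inv_le_inv' (hpt ξ hne)
  · -- part (b)
    intro ht2 hint2
    have hgle : ∀ ξ, (⨅ x, oneDimSymbol c₂ ν₂ x ξ)
        ≤ a * ENNReal.ofReal (ξ ^ 2) + ⨅ x, oneDimSymbol c₁ ν₁ x ξ := by
      intro ξ
      rw [ENNReal.add_iInf]
      exact le_iInf fun x => le_trans (iInf_le (fun x' => oneDimSymbol c₂ ν₂ x' ξ) x) (hcomp x ξ)
    constructor
    · rw [ENNReal.tendsto_nhds_top_iff_nat]
      intro n
      have hlt : ((n : ℝ≥0∞) + a) < ⊤ :=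
        ENNReal.add_lt_top.mpr ⟨ENNReal.natCast_lt_top n, haT.lt_top⟩
      have hev := ht2.eventually_mem (Ioi_mem_nhds hlt)
      filter_upwards [hev, eventually_mem_nhdsWithin] with ξ hξ hξ0
      have hξne : ξ ≠ 0 := hξ0
      have hb0 : ENNReal.ofReal (ξ ^ 2) ≠ 0 := by
        simp only [ne_eq, ENNReal.ofReal_eq_zero, not_le]
        positivity
      have hchain : (⨅ x, oneDimSymbol c₂ ν₂ x ξ) / ENNReal.ofReal (ξ ^ 2)
          ≤ a + (⨅ x, oneDimSymbol c₁ ν₁ x ξ) / ENNReal.ofReal (ξ ^ 2) := by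
        calc (⨅ x, oneDimSymbol c₂ ν₂ x ξ) / ENNReal.ofReal (ξ ^ 2)
            ≤ (a * ENNReal.ofReal (ξ ^ 2) + ⨅ x, oneDimSymbol c₁ ν₁ x ξ)
              / ENNReal.ofReal (ξ ^ 2) := ENNReal.div_le_div_right (hgle ξ) _
          _ = a * ENNReal.ofReal (ξ ^ 2) / ENNReal.ofReal (ξ ^ 2)
              + (⨅ x, oneDimSymbol c₁ ν₁ x ξ) / ENNReal.ofReal (ξ ^ 2) := ENNReal.add_div
          _ = a + (⨅ x, oneDimSymbol c₁ ν₁ x ξ) / ENNReal.ofReal (ξ ^ 2) := by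
              rw [mul_div_assoc, ENNReal.div_self hb0 ENNReal.ofReal_ne_top, mul_one]
      have hlt2 := lt_of_lt_of_le (Set.mem_Ioi.mp hξ) hchain
      rw [add_comm (n : ℝ≥0∞) a] at hlt2
      exact (ENNReal.add_lt_add_iff_left haT).mp hlt2
    · obtain ⟨r, hr, hfin⟩ := hint2
      have h2aT : (2 * a) < ⊤ := ENNReal.mul_lt_top (by norm_num) haT.lt_top
      have hev := ht2.eventually_mem (Ioi_mem_nhds h2aT)
      obtain ⟨ε, hε, hball⟩ := Metric.mem_nhdsWithin_iff.mp hev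
      refine ⟨min r ε, lt_min hr hε, ?_⟩
      have hptb : ∀ ξ : ℝ, ξ ∈ Metric.ball (0:ℝ) (min r ε) → ξ ≠ 0 →
          (⨅ x, oneDimSymbol c₁ ν₁ x ξ)⁻¹ ≤ 2 * (⨅ x, oneDimSymbol c₂ ν₂ x ξ)⁻¹ := by
        intro ξ hmem hne
        have hmem' : ξ ∈ Metric.ball (0:ℝ) ε :=
          Metric.ball_subset_ball (min_le_right r ε) hmem
        have hgt : 2 * a < (⨅ x, oneDimSymbol c₂ ν₂ x ξ) / ENNReal.ofReal (ξ ^ 2) :=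
          Set.mem_Ioi.mp (hball ⟨hmem', hne⟩)
        have hb0 : ENNReal.ofReal (ξ ^ 2) ≠ 0 := by
          simp only [ne_eq, ENNReal.ofReal_eq_zero, not_le]
          positivity
        have hab2 : a * ENNReal.ofReal (ξ ^ 2) * 2 ≤ ⨅ x, oneDimSymbol c₂ ν₂ x ξ := by
          have := (ENNReal.lt_div_iff_mul_lt (Or.inl hb0)
            (Or.inl ENNReal.ofReal_ne_top)).mp hgt
          calc a * ENNReal.ofReal (ξ ^ 2) * 2 = 2 * a * ENNReal.ofReal (ξ ^ 2) := by ring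
            _ ≤ ⨅ x, oneDimSymbol c₂ ν₂ x ξ := this.le
        rcases eq_or_ne (⨅ x, oneDimSymbol c₂ ν₂ x ξ) ⊤ with htop | hfin2
        · have hg1top : (⨅ x, oneDimSymbol c₁ ν₁ x ξ) = ⊤ := by
            by_contra hne2
            have hne3 : a * ENNReal.ofReal (ξ ^ 2) + (⨅ x, oneDimSymbol c₁ ν₁ x ξ) ≠ ⊤ :=
              ENNReal.add_ne_top.mpr ⟨ENNReal.mul_ne_top haT ENNReal.ofReal_ne_top, hne2⟩
            exact hne3 (top_le_iff.mp (htop ▸ hgle ξ))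
          rw [hg1top]
          simp
        · have h1 : a * ENNReal.ofReal (ξ ^ 2) ≤ (⨅ x, oneDimSymbol c₂ ν₂ x ξ) / 2 :=
            (ENNReal.le_div_iff_mul_le (Or.inl (by norm_num)) (Or.inl (by norm_num))).mpr hab2
          have h2 : (⨅ x, oneDimSymbol c₂ ν₂ x ξ)
              ≤ (⨅ x, oneDimSymbol c₂ ν₂ x ξ) / 2 + ⨅ x, oneDimSymbol c₁ ν₁ x ξ :=
            (hgle ξ).trans (add_le_add_left h1 _)
          have h3 : (⨅ x, oneDimSymbol c₂ ν₂ x ξ) / 2 ≤ ⨅ x, oneDimSymbol c₁ ν₁ x ξ := by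
            have h4 := tsub_le_iff_left.mpr h2
            rwa [ENNReal.sub_half hfin2] at h4
          calc (⨅ x, oneDimSymbol c₁ ν₁ x ξ)⁻¹
              ≤ ((⨅ x, oneDimSymbol c₂ ν₂ x ξ) / 2)⁻¹ := ENNReal.inv_le_inv' h3
            _ = 2 * (⨅ x, oneDimSymbol c₂ ν₂ x ξ)⁻¹ := by
                rw [div_eq_mul_inv, ENNReal.mul_inv (Or.inr (by norm_num))
                  (Or.inr (by norm_num)), inv_inv, mul_comm]
      calc ∫⁻ ξ in Metric.ball (0:ℝ) (min r ε), (⨅ x, oneDimSymbol c₁ ν₁ x ξ)⁻¹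
          ≤ ∫⁻ ξ in Metric.ball (0:ℝ) (min r ε), 2 * (⨅ x, oneDimSymbol c₂ ν₂ x ξ)⁻¹ := by
            apply lintegral_mono_ae
            filter_upwards [ae_restrict_mem Metric.isOpen_ball.measurableSet,
              ae_restrict_of_ae hne0] with ξ hmem hne
            exact hptb ξ hmem hne
        _ = 2 * ∫⁻ ξ in Metric.ball (0:ℝ) (min r ε), (⨅ x, oneDimSymbol c₂ ν₂ x ξ)⁻¹ :=
            lintegral_const_mul' 2 _ (by norm_num)
        _ ≤ 2 * ∫⁻ ξ in Metric.ball (0:ℝ) r, (⨅ x, oneDimSymbol c₂ ν₂ x ξ)⁻¹ :=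
            mul_le_mul_right (lintegral_mono_set (Metric.ball_subset_ball (min_le_left r ε))) 2
        _ < ⊤ := ENNReal.mul_lt_top (by norm_num) hfin
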